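/- With κ in the open first quadrant and (n²-κ²)^{1/2} = a_n - i b_n (a_n, b_n > 0) the principal root, the Fourier multiplier Λ_κ⁻¹ g = ∑_n (n²-κ²)^{1/2} ĝ(n) e^{int} satisfies: there is c > 0 with Re⟨Λ_κ⁻¹ g, ḡ⟩ ≥ c‖g‖²_{H^{1/2}} and -Im⟨Λ_κ⁻¹ g, ḡ⟩ ≥ c‖g‖²_{H^{-1/2}} for all g in H^{1/2}. -/

import Mathlib

noncomputable def rootK (κ : ℂ) (n : ℤ) : ℂ := ((n : ℂ) ^ 2 - κ ^ 2) ^ ((1 : ℂ) / 2)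

/-- The Fourier multiplier Λ_κ⁻¹ : (Λ_κ⁻¹ g)^(n) = (n² - κ²)^{1/2} ĝ(n). -/
noncomputable def LamKappaInv (κ : ℂ) (g : ℤ → ℂ) : ℤ → ℂ := fun n => rootK κ n * g n

noncomputable def pairS (f g : ℤ → ℂ) : ℂ := ∑' n : ℤ, f n * g (-n)

noncomputable def conjS (φ : ℤ → ℂ) : ℤ → ℂ := fun n => (starRingEnd ℂ) (φ (-n))

noncomputable def sobWt (s : ℝ) (n : ℤ) : ℝ := if n = 0 then 1 else |(n : ℝ)| ^ (2 * s)

noncomputable def sobNormSq (s : ℝ) (φ : ℤ → ℂ) : ℝ :=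
  ∑' n : ℤ, sobWt s n * ‖φ n‖ ^ 2

theorem one_le_abs_int (n : ℤ) (hn : n ≠ 0) : (1:ℝ) ≤ |(n:ℝ)| := by
  have : (1:ℤ) ≤ |n| := Int.one_le_abs hn
  calc (1:ℝ) ≤ |n| := by exact_mod_cast this
    _ = |(n:ℝ)| := by push_cast [Int.cast_abs]; rfl

theorem sobWt_half (n : ℤ) (hn : n ≠ 0) : sobWt (1/2) n = |(n:ℝ)| := by
  simp only [sobWt, if_neg hn]; norm_num

theorem sobWt_half_pos (n : ℤ) : 0 < sobWt (1/2) n := by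
  by_cases hn : n = 0
  · simp [sobWt, hn]
  · rw [sobWt_half n hn]
    simpa using (show (n:ℝ) ≠ 0 by exact_mod_cast hn)

theorem one_le_sobWt_half (n : ℤ) : 1 ≤ sobWt (1/2) n := by
  by_cases hn : n = 0
  · simp [sobWt, hn]
  · rw [sobWt_half n hn]; exact one_le_abs_int n hn

theorem sobWt_neg_half (n : ℤ) : sobWt (-(1/2)) n = (sobWt (1/2) n)⁻¹ := by
  by_cases hn : n = 0
  · simp [sobWt, hn]
  · rw [sobWt_half n hn]
    simp only [sobWt, if_neg hn]
    rw [show (2 * -(1/2) : ℝ) = -1 by norm_num, Real.rpow_neg_one]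

theorem sobWt_half_le_sqrt (n : ℤ) : sobWt (1/2) n ≤ Real.sqrt ((n:ℝ)^2 + 1) := by
  by_cases hn : n = 0
  · simp only [sobWt, hn, if_pos rfl]
    rw [show (1:ℝ) = Real.sqrt 1 from (Real.sqrt_one).symm]
    exact Real.sqrt_le_sqrt (by push_cast [hn]; norm_num)
  · rw [sobWt_half n hn, show |(n:ℝ)| = Real.sqrt ((n:ℝ)^2) by rw [Real.sqrt_sq_eq_abs]]
    exact Real.sqrt_le_sqrt (by nlinarith)

theorem sqrt_le_two_sobWt (n : ℤ) : Real.sqrt ((n:ℝ)^2 + 1) ≤ 2 * sobWt (1/2) n := by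
  by_cases hn : n = 0
  · simp only [sobWt, hn, if_pos rfl, Int.cast_zero]
    rw [show ((0:ℝ)^2 + 1) = 1 by norm_num, Real.sqrt_one]; norm_num
  · rw [sobWt_half n hn]
    have h1 := one_le_abs_int n hn
    calc Real.sqrt ((n:ℝ)^2 + 1) ≤ Real.sqrt ((2*|(n:ℝ)|)^2) := by
          apply Real.sqrt_le_sqrt; nlinarith [sq_abs (n:ℝ)]
      _ = 2 * |(n:ℝ)| := Real.sqrt_sq (by positivity)

theorem cpow_half_sign (z : ℂ) (hz : z.im < 0) : 0 < (z ^ ((1:ℂ)/2)).re ∧ (z ^ ((1:ℂ)/2)).im < 0 := by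
  have hz0 : z ≠ 0 := by intro h; rw [h] at hz; simp at hz
  rw [Complex.cpow_def_of_ne_zero hz0]
  have harg1 : Complex.arg z < 0 := Complex.arg_neg_iff.mpr hz
  have harg2 : -Real.pi < Complex.arg z := Complex.neg_pi_lt_arg z
  have him : (Complex.log z * ((1:ℂ)/2)).im = Complex.arg z / 2 := by
    simp [Complex.mul_im, Complex.log_im, Complex.log_re]; ring
  constructor
  · rw [Complex.exp_re, him]
    exact mul_pos (Real.exp_pos _) (Real.cos_pos_of_mem_Ioo
      ⟨by nlinarith [Real.pi_pos], by nlinarith [Real.pi_pos]⟩)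
  · rw [Complex.exp_im, him]
    exact mul_neg_of_pos_of_neg (Real.exp_pos _)
      (Real.sin_neg_of_neg_of_neg_pi_lt (by nlinarith [Real.pi_pos]) (by nlinarith [Real.pi_pos]))

theorem rootK_facts (κ : ℂ) (h1 : 0 < κ.re) (h2 : 0 < κ.im) (n : ℤ) :
    0 < (rootK κ n).re ∧ (rootK κ n).im < 0 ∧
    (rootK κ n).re * (-(rootK κ n).im) = κ.re * κ.im ∧
    (rootK κ n).re^2 - (-(rootK κ n).im)^2 = (n:ℝ)^2 - (κ^2).re ∧
    (rootK κ n).re^2 + (-(rootK κ n).im)^2 = ‖(n:ℂ)^2 - κ^2‖ := by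
  set z : ℂ := (n:ℂ)^2 - κ^2 with hzdef
  have hzim : z.im = -(2 * (κ.re * κ.im)) := by
    simp [hzdef, pow_two, Complex.sub_im, Complex.mul_im]; ring
  have hzim0 : z.im < 0 := by rw [hzim]; nlinarith
  have hz0 : z ≠ 0 := fun h => by rw [h] at hzim0; simp at hzim0
  obtain ⟨hre, him⟩ := cpow_half_sign z hzim0
  have hw2 : (rootK κ n)^2 = z := by
    rw [rootK, pow_two, ← Complex.cpow_add _ _ hz0]; norm_num
  set w := rootK κ n
  have hw2re : (w^2).re = z.re := by rw [hw2]
  have hw2im : (w^2).im = z.im := by rw [hw2]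
  rw [pow_two, Complex.mul_re] at hw2re
  rw [pow_two, Complex.mul_im] at hw2im
  refine ⟨hre, him, ?_, ?_, ?_⟩
  · rw [hzim] at hw2im; nlinarith
  · have : z.re = (n:ℝ)^2 - (κ^2).re := by
      simp [hzdef, Complex.sub_re, pow_two, Complex.mul_re]
    nlinarith
  · have h2 : ‖z‖ = ‖w‖ ^ 2 := by rw [← hw2, norm_pow]
    rw [h2, Complex.sq_norm, Complex.normSq_apply]; ring

set_option maxHeartbeats 1000000 in
theorem real_bounds (a b p r t M : ℝ) (ha : 0 < a) (hb : 0 < b) (hab : a*b = p)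
    (hdiff : a^2 - b^2 = t - r) (hsum : a^2 + b^2 ≤ t + M) (ht : 0 ≤ t) (hM : 0 < M) :
    min (1/2) (min p (p^2/(M+|r|+1)) / (2*(|r|+1)+1)) * (t+1) ≤ a^2 ∧
    a^2 ≤ (M+1)*(t+1) := by
  have hp : 0 < p := hab ▸ mul_pos ha hb
  set D : ℝ := M + |r| + 1 with hD
  set K : ℝ := 2*(|r|+1) with hK
  have habs : 0 ≤ |r| := abs_nonneg r
  have hra : r ≤ |r| := le_abs_self r
  have hra' : -|r| ≤ r := neg_abs_le r
  have hDpos : 0 < D := by positivity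
  have hKpos : 0 < K := by positivity
  have h4 : a^4 = (t-r)*a^2 + p^2 := by nlinarith
  constructor
  · set m : ℝ := min p (p^2/D) with hm
    have hmpos : 0 < m := lt_min hp (by positivity)
    have hmp : m ≤ p := min_le_left _ _
    have hmd : m ≤ p^2/D := min_le_right _ _
    set cA : ℝ := min (1/2) (m / (K+1)) with hcA
    have hcA1 : cA ≤ 1/2 := min_le_left _ _
    have hcA2 : cA ≤ m/(K+1) := min_le_right _ _
    have hcApos : 0 < cA := lt_min (by norm_num) (by positivity)
    by_cases htK : K ≤ t
    · have h5 : t - r ≤ a^2 := by nlinarith [sq_nonneg p, mul_pos ha ha]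
      have : (t+1)/2 ≤ a^2 := by nlinarith
      nlinarith
    · push_neg at htK
      have hma : m ≤ a^2 := by
        by_cases hrt : r ≤ t
        · have h6 : p^2 ≤ a^4 := by nlinarith [mul_nonneg (sub_nonneg.mpr hrt) (sq_nonneg a)]
          have : p ≤ a^2 := by nlinarith [sq_nonneg (a^2 - p), sq_nonneg (a^2 + p)]
          linarith
        · push_neg at hrt
          have hb1 : a^2 * (a^2 + (r - t)) = p^2 := by
            linear_combination a^2 * hdiff + (a*b+p) * hab
          have hb2 : a^2 + (r - t) ≤ D := by linarith [sq_nonneg b]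
          have : p^2/D ≤ a^2 := by
            rw [div_le_iff₀ hDpos]
            nlinarith [mul_nonneg (sq_nonneg a) (sub_nonneg.mpr hb2)]
          linarith
      have : cA * (t+1) ≤ m := by
        calc cA * (t+1) ≤ (m/(K+1)) * (t+1) := by
              apply mul_le_mul_of_nonneg_right hcA2 (by linarith)
          _ ≤ (m/(K+1)) * (K+1) := by
              apply mul_le_mul_of_nonneg_left (by linarith) (by positivity)
          _ = m := div_mul_cancel₀ m (by positivity)
      linarith
  · nlinarith [sq_nonneg b, mul_nonneg ht hM.le]

theorem rootK_bounds (κ : ℂ) (h1 : 0 < κ.re) (h2 : 0 < κ.im) :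
    ∃ c C : ℝ, 0 < c ∧ 0 < C ∧ ∀ n : ℤ,
      c * sobWt (1/2) n ≤ (rootK κ n).re ∧
      c * sobWt (-(1/2)) n ≤ -(rootK κ n).im ∧
      ‖rootK κ n‖ ≤ C * sobWt (1/2) n := by
  set p : ℝ := κ.re * κ.im with hp
  have hppos : 0 < p := mul_pos h1 h2
  set r : ℝ := (κ^2).re with hr
  set M : ℝ := ‖κ‖ ^ 2 with hM
  have hκ0 : κ ≠ 0 := fun h => by rw [h] at h1; simp at h1
  have hMpos : 0 < M := by rw [hM]; exact pow_pos (norm_pos_iff.mpr hκ0) 2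
  set cA : ℝ := min (1/2) (min p (p^2/(M+|r|+1)) / (2*(|r|+1)+1)) with hcA
  have hcApos : 0 < cA := by
    apply lt_min (by norm_num)
    exact div_pos (lt_min hppos (div_pos (pow_pos hppos 2) (by linarith [abs_nonneg r]))) (by positivity)
  set C : ℝ := 2 * Real.sqrt (M+1) with hC
  have hCpos : 0 < C := by positivity
  refine ⟨min (Real.sqrt cA) (p/C), C, lt_min (Real.sqrt_pos.mpr hcApos) (by positivity), hCpos, fun n => ?_⟩
  obtain ⟨ha, him, hab, hdiff, hsum⟩ := rootK_facts κ h1 h2 n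
  set a : ℝ := (rootK κ n).re
  set b : ℝ := -(rootK κ n).im with hbdef
  have hb : 0 < b := by simp [hbdef]; linarith
  set t : ℝ := (n:ℝ)^2 with ht
  have htn : 0 ≤ t := sq_nonneg _
  have habsle : ‖(n:ℂ)^2 - κ^2‖ ≤ t + M := by
    have h0 := norm_sub_le ((n:ℂ)^2) (κ^2)
    calc ‖(n:ℂ)^2 - κ^2‖ ≤ ‖(n:ℂ)^2‖ + ‖κ^2‖ := h0
      _ = t + M := by
          rw [norm_pow, norm_pow, Complex.norm_intCast, ht, hM, sq_abs]
  obtain ⟨hcl, hcu⟩ := real_bounds a b p r t M ha hb hab hdiff (hsum ▸ habsle) htn hMpos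
  have hs := sobWt_half_pos n
  have hs1 := sobWt_half_le_sqrt n
  have hs2 := sqrt_le_two_sobWt n
  -- upper bound on sqrt((M+1)(t+1))
  have hsqrtbd : Real.sqrt ((M+1)*(t+1)) ≤ C * sobWt (1/2) n := by
    rw [Real.sqrt_mul (by positivity)]
    calc Real.sqrt (M+1) * Real.sqrt (t+1) ≤ Real.sqrt (M+1) * (2 * sobWt (1/2) n) := by
          apply mul_le_mul_of_nonneg_left hs2 (Real.sqrt_nonneg _)
      _ = C * sobWt (1/2) n := by rw [hC]; ring
  have haup : a ≤ C * sobWt (1/2) n := by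
    calc a = Real.sqrt (a^2) := (Real.sqrt_sq ha.le).symm
      _ ≤ Real.sqrt ((M+1)*(t+1)) := Real.sqrt_le_sqrt hcu
      _ ≤ C * sobWt (1/2) n := hsqrtbd
  refine ⟨?_, ?_, ?_⟩
  · have key : Real.sqrt cA * sobWt (1/2) n ≤ a := by
      calc Real.sqrt cA * sobWt (1/2) n ≤ Real.sqrt cA * Real.sqrt (t+1) := by
            apply mul_le_mul_of_nonneg_left hs1 (Real.sqrt_nonneg _)
        _ = Real.sqrt (cA * (t+1)) := (Real.sqrt_mul hcApos.le _).symm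
        _ ≤ Real.sqrt (a^2) := Real.sqrt_le_sqrt hcl
        _ = a := Real.sqrt_sq ha.le
    calc min (Real.sqrt cA) (p/C) * sobWt (1/2) n ≤ Real.sqrt cA * sobWt (1/2) n := by
          apply mul_le_mul_of_nonneg_right (min_le_left _ _) hs.le
      _ ≤ a := key
  · show min (Real.sqrt cA) (p/C) * sobWt (-(1/2)) n ≤ b
    have key : p / C * sobWt (-(1/2)) n ≤ b := by
      rw [sobWt_neg_half, show p/C * (sobWt (1/2) n)⁻¹ = p / (C * sobWt (1/2) n) by
        field_simp]
      rw [div_le_iff₀ (by positivity)]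
      calc p = a * b := hab.symm
        _ ≤ (C * sobWt (1/2) n) * b := mul_le_mul_of_nonneg_right haup hb.le
        _ = b * (C * sobWt (1/2) n) := by ring
    calc min (Real.sqrt cA) (p/C) * sobWt (-(1/2)) n ≤ p/C * sobWt (-(1/2)) n := by
          apply mul_le_mul_of_nonneg_right (min_le_right _ _)
          rw [sobWt_neg_half]; positivity
      _ ≤ b := key
  · have habsw : ‖rootK κ n‖ ^ 2 = a^2 + b^2 := by
      rw [Complex.sq_norm, Complex.normSq_apply, hbdef]; ring
    calc ‖rootK κ n‖ = Real.sqrt (a^2 + b^2) := by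
          rw [← habsw, Real.sqrt_sq (norm_nonneg _)]
      _ ≤ Real.sqrt ((M+1)*(t+1)) := by
          apply Real.sqrt_le_sqrt
          rw [hsum]
          calc ‖(n:ℂ)^2 - κ^2‖ ≤ t + M := habsle
            _ ≤ (M+1)*(t+1) := by nlinarith
      _ ≤ C * sobWt (1/2) n := hsqrtbd

/-- Coercivity of Λ_κ⁻¹ : there is c > 0 with Re⟨Λ_κ⁻¹ g, ḡ⟩ ≥ c ‖g‖²_{H^{1/2}}
and -Im⟨Λ_κ⁻¹ g, ḡ⟩ ≥ c ‖g‖²_{H^{-1/2}} for all g ∈ H^{1/2}. -/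
theorem stmt13 (κ : ℂ) (h1 : 0 < κ.re) (h2 : 0 < κ.im) :
    ∃ c : ℝ, 0 < c ∧ ∀ g : ℤ → ℂ,
      (Summable fun n : ℤ => sobWt (1 / 2) n * ‖g n‖ ^ 2) →
      c * sobNormSq (1 / 2) g ≤ (pairS (LamKappaInv κ g) (conjS g)).re ∧
      c * sobNormSq (-(1 / 2)) g ≤ -(pairS (LamKappaInv κ g) (conjS g)).im := by
  obtain ⟨c, C, hc, hC, hbd⟩ := rootK_bounds κ h1 h2
  refine ⟨c, hc, fun g hsum => ?_⟩
  set F : ℤ → ℂ := fun n => LamKappaInv κ g n * conjS g (-n) with hF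
  have hterm : ∀ n : ℤ, F n = rootK κ n * ((‖g n‖ ^ 2 : ℝ) : ℂ) := by
    intro n
    simp only [hF, LamKappaInv, conjS, neg_neg]
    rw [mul_assoc, Complex.mul_conj, Complex.normSq_eq_norm_sq]
  have hnormle : ∀ n, ‖F n‖ ≤ C * (sobWt (1/2) n * ‖g n‖^2) := by
    intro n
    rw [hterm n, norm_mul, Complex.norm_real,
      Real.norm_of_nonneg (by positivity)]
    calc ‖rootK κ n‖ * ‖g n‖^2
        ≤ (C * sobWt (1/2) n) * ‖g n‖^2 :=
          mul_le_mul_of_nonneg_right ((hbd n).2.2) (by positivity)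
      _ = C * (sobWt (1/2) n * ‖g n‖^2) := by ring
  have hSF : Summable F :=
    Summable.of_norm (Summable.of_nonneg_of_le (fun n => norm_nonneg _) hnormle (hsum.mul_left C))
  have hpair : pairS (LamKappaInv κ g) (conjS g) = ∑' n, F n := rfl
  have hre : (∑' n, F n).re = ∑' n, (rootK κ n).re * ‖g n‖^2 := by
    rw [Complex.re_tsum hSF]
    exact tsum_congr fun n => by rw [hterm n]; simp only [Complex.mul_re, Complex.ofReal_re, Complex.ofReal_im, mul_zero, sub_zero]
  have him : (∑' n, F n).im = ∑' n, (rootK κ n).im * ‖g n‖^2 := by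
    rw [Complex.im_tsum hSF]
    exact tsum_congr fun n => by rw [hterm n]; simp only [Complex.mul_im, Complex.ofReal_re, Complex.ofReal_im, mul_zero, zero_add]
  have hwnn : ∀ n : ℤ, 0 ≤ sobWt (1/2) n * ‖g n‖^2 := by
    intro n; exact mul_nonneg (sobWt_half_pos n).le (by positivity)
  have hsRe : Summable fun n => (rootK κ n).re * ‖g n‖^2 := by
    apply Summable.of_nonneg_of_le _ _ (hsum.mul_left C)
    · intro n
      exact mul_nonneg (le_trans (mul_nonneg hc.le (sobWt_half_pos n).le) (hbd n).1)
        (by positivity)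
    · intro n
      calc (rootK κ n).re * ‖g n‖^2
          ≤ ‖rootK κ n‖ * ‖g n‖^2 :=
            mul_le_mul_of_nonneg_right (Complex.re_le_norm _) (by positivity)
        _ ≤ (C * sobWt (1/2) n) * ‖g n‖^2 :=
            mul_le_mul_of_nonneg_right ((hbd n).2.2) (by positivity)
        _ = C * (sobWt (1/2) n * ‖g n‖^2) := by ring
  have hnwnn : ∀ n : ℤ, 0 ≤ sobWt (-(1/2)) n := by
    intro n; rw [sobWt_neg_half]; exact inv_nonneg.mpr (sobWt_half_pos n).le
  have hsIm : Summable fun n => -(rootK κ n).im * ‖g n‖^2 := by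
    apply Summable.of_nonneg_of_le _ _ (hsum.mul_left C)
    · intro n
      exact mul_nonneg (le_trans (mul_nonneg hc.le (hnwnn n)) (hbd n).2.1) (by positivity)
    · intro n
      calc -(rootK κ n).im * ‖g n‖^2
          ≤ ‖rootK κ n‖ * ‖g n‖^2 :=
            mul_le_mul_of_nonneg_right
              (le_trans (neg_le_abs _) (Complex.abs_im_le_norm _)) (by positivity)
        _ ≤ (C * sobWt (1/2) n) * ‖g n‖^2 :=
            mul_le_mul_of_nonneg_right ((hbd n).2.2) (by positivity)
        _ = C * (sobWt (1/2) n * ‖g n‖^2) := by ring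
  have hsum' : Summable fun n : ℤ => sobWt (-(1/2)) n * ‖g n‖^2 := by
    apply Summable.of_nonneg_of_le _ _ hsum
    · intro n; exact mul_nonneg (hnwnn n) (by positivity)
    · intro n
      apply mul_le_mul_of_nonneg_right _ (by positivity)
      rw [sobWt_neg_half]
      exact le_trans (inv_le_one_of_one_le₀ (one_le_sobWt_half n)) (one_le_sobWt_half n)
  constructor
  · rw [hpair, hre]
    rw [sobNormSq, ← tsum_mul_left]
    apply Summable.tsum_le_tsum _ (hsum.mul_left c) hsRe
    intro n
    calc c * (sobWt (1/2) n * ‖g n‖^2)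
        = (c * sobWt (1/2) n) * ‖g n‖^2 := by ring
      _ ≤ (rootK κ n).re * ‖g n‖^2 :=
          mul_le_mul_of_nonneg_right ((hbd n).1) (by positivity)
  · rw [hpair, him, ← tsum_neg]
    rw [sobNormSq, ← tsum_mul_left]
    apply Summable.tsum_le_tsum _ (hsum'.mul_left c) (by simpa only [neg_mul] using hsIm)
    intro n
    calc c * (sobWt (-(1/2)) n * ‖g n‖^2)
        = (c * sobWt (-(1/2)) n) * ‖g n‖^2 := by ring
      _ ≤ -(rootK κ n).im * ‖g n‖^2 :=
          mul_le_mul_of_nonneg_right ((hbd n).2.1) (by positivity)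
      _ = -((rootK κ n).im * ‖g n‖^2) := by ring
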